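/- Let I and X be compact metric spaces and {f_t}_{t∈I} a continuous family of continuous self-maps of X such that for some m > 0, f_t^{m+1}(X) = f_t^m(X) for all t ∈ I. For t ∈ I let Ω_t = {((x₀,t),(x₁,t),…) ∈ (X×I)^ℕ : f_t(x_{k+1}) = x_k for all k}. Then each Ω_t is a compact subset of (X×I)^ℕ (with the metric d_∞) and the map t ↦ Ω_t is continuous with respect to the Hausdorff metric on compact subsets of (X×I)^ℕ. -/
import Mathlib


/-- The metric `d_∞(z,w) = max_i min(d(z_i,w_i),1)/(i+1)` on `(X×I)^ℕ`. -/
noncomputable def dInfty {Z : Type*} [MetricSpace Z] (z w : ℕ → Z) : ℝ :=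
  ⨆ i : ℕ, min (dist (z i) (w i)) 1 / (i + 1 : ℝ)

section Aux

variable {X I : Type*} [MetricSpace X] [MetricSpace I]

/-- Backward orbits exist through any point of a set on which `f (·, s)` is onto. -/
private lemma back_orbit (f : X × I → X) (s : I) (S : Set X)
    (hs : ∀ p ∈ S, ∃ q ∈ S, f (q, s) = p) {p : X} (hp : p ∈ S) :
    ∃ x : ℕ → X, x 0 = p ∧ ∀ k, f (x (k + 1), s) = x k := by
  classical
  let step : S → S := fun q => ⟨(hs q q.2).choose, (hs q q.2).choose_spec.1⟩
  have hstep : ∀ q : S, f ((step q : X), s) = q := fun q => (hs q q.2).choose_spec.2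
  refine ⟨fun k => (step^[k] ⟨p, hp⟩ : S), rfl, fun k => ?_⟩
  show f (((step^[k + 1] ⟨p, hp⟩ : S) : X), s) = ((step^[k] ⟨p, hp⟩ : S) : X)
  rw [Function.iterate_succ_apply']
  exact hstep _

/-- Splicing: a backward orbit for `f (·, s)` whose `k`-th entry, for `k ≤ N`,
is the `(m + (N - k))`-th forward iterate of a given base point `u`. -/
private lemma splice (f : X × I → X) (m N : ℕ) (s : I)
    (hs : ∀ p ∈ Set.range ((fun x => f (x, s))^[m]),
        ∃ q ∈ Set.range ((fun x => f (x, s))^[m]), f (q, s) = p)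
    (u : X) :
    ∃ y : ℕ → X, (∀ k, f (y (k + 1), s) = y k) ∧
      ∀ k ≤ N, y k = (fun x => f (x, s))^[m + (N - k)] u := by
  classical
  set g := fun x => f (x, s) with hg
  obtain ⟨h, h0, hh⟩ := back_orbit f s _ hs ⟨u, rfl⟩
  refine ⟨fun k => if k ≤ N then g^[m + (N - k)] u else h (k - N), fun k => ?_,
    fun k hk => by simp [hk]⟩
  by_cases h1 : k + 1 ≤ N
  · have hk : k ≤ N := by omega
    simp only [if_pos h1, if_pos hk]
    have he : m + (N - k) = (m + (N - (k + 1))) + 1 := by omega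
    rw [he, Function.iterate_succ_apply']
  · by_cases h2 : k ≤ N
    · have hk : k = N := by omega
      simp only [if_neg h1, if_pos h2]
      have h1' : k + 1 - N = 1 := by omega
      rw [h1', hh 0, h0]
      have h2' : m + (N - k) = m := by omega
      rw [h2']
    · simp only [if_neg h1, if_neg h2]
      have he : k + 1 - N = (k - N) + 1 := by omega
      rw [he]
      exact hh (k - N)

/-- In a backward orbit, `x k` is the `j`-th forward image of `x (k + j)`. -/
private lemma orbit_iterate (f : X × I → X) (s : I) (x : ℕ → X)
    (hx : ∀ k, f (x (k + 1), s) = x k) :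
    ∀ j k, (fun x => f (x, s))^[j] (x (k + j)) = x k := by
  intro j
  induction j with
  | zero => intro k; simp
  | succ j ih =>
    intro k
    rw [Function.iterate_succ_apply, show k + (j + 1) = (k + j) + 1 by omega,
      hx (k + j), ih]

/-- The parametrized iterate map. -/
private def Gmap (f : X × I → X) (j : ℕ) (p : X × I) : X :=
  (fun x => f (x, p.2))^[j] p.1

private lemma continuous_Gmap (f : X × I → X) (hf : Continuous f) (j : ℕ) :
    Continuous (Gmap f j) := by
  induction j with
  | zero => exact continuous_fst
  | succ j ih =>
    have he : Gmap f (j + 1) = fun p => f (Gmap f j p, p.2) := by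
      funext p
      simp [Gmap, Function.iterate_succ_apply']
    rw [he]
    exact hf.comp (ih.prodMk continuous_snd)

/-- One-sided approximation: a backward orbit for `f (·, t)` is approximated on the
first `N + 1` coordinates by a backward orbit for `f (·, s)`, provided the iterates
at the base point `x (N + m)` for parameters `t` and `s` are `ε`-close. -/
private lemma approx (f : X × I → X) (m N : ℕ) (t s : I) {ε : ℝ}
    (hs : ∀ p ∈ Set.range ((fun x => f (x, s))^[m]),
        ∃ q ∈ Set.range ((fun x => f (x, s))^[m]), f (q, s) = p)
    (x : ℕ → X) (hx : ∀ k, f (x (k + 1), t) = x k)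
    (hclose : ∀ j ≤ m + N,
        dist (Gmap f j (x (N + m), t)) (Gmap f j (x (N + m), s)) < ε) :
    ∃ y : ℕ → X, (∀ k, f (y (k + 1), s) = y k) ∧ ∀ k ≤ N, dist (x k) (y k) < ε := by
  obtain ⟨y, hy, hyk⟩ := splice f m N s hs (x (N + m))
  refine ⟨y, hy, fun k hk => ?_⟩
  have hxk : x k = (fun x => f (x, t))^[m + (N - k)] (x (N + m)) := by
    have h1 := orbit_iterate f t x hx (m + (N - k)) k
    rw [show k + (m + (N - k)) = N + m by omega] at h1
    exact h1.symm
  rw [hxk, hyk k hk]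
  have h2 := hclose (m + (N - k)) (by omega)
  simpa [Gmap] using h2

/-- A sup bound for `dInfty`. -/
private lemma dInfty_lt {Z : Type*} [MetricSpace Z] (z w : ℕ → Z) {δ : ℝ} (hδ : 0 < δ)
    (N : ℕ) (hN : 1 / (N + 1 : ℝ) ≤ δ / 2)
    (h : ∀ i ≤ N, dist (z i) (w i) ≤ δ / 2) : dInfty z w < δ := by
  have hhalf : dInfty z w ≤ δ / 2 := by
    apply Real.iSup_le _ (by linarith)
    intro i
    by_cases hi : i ≤ N
    · calc min (dist (z i) (w i)) 1 / (i + 1 : ℝ)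
          ≤ min (dist (z i) (w i)) 1 :=
            div_le_self (le_min dist_nonneg zero_le_one)
              (by linarith [Nat.cast_nonneg (α := ℝ) i])
        _ ≤ dist (z i) (w i) := min_le_left _ _
        _ ≤ δ / 2 := h i hi
    · calc min (dist (z i) (w i)) 1 / (i + 1 : ℝ)
          ≤ 1 / (N + 1 : ℝ) := by
            apply div_le_div₀ (by norm_num) (min_le_right _ _) (by positivity)
            have : (N : ℝ) ≤ i := by exact_mod_cast Nat.le_of_lt (by omega)
            linarith
        _ ≤ δ / 2 := hN
  linarith

end Aux

/-- For a continuous family `{f_t}_{t∈I}` of continuous self-maps of a compact metric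
space `X` (with `I` compact metric) which stabilizes uniformly at some iterate `m > 0`,
the sets `Ω_t = {((x₀,t),(x₁,t),…) : f_t (x_{k+1}) = x_k for all k} ⊆ (X×I)^ℕ` are
compact, and `t ↦ Ω_t` is continuous in the Hausdorff metric induced by `d_∞`:
for every `t` and `δ > 0` there is `η > 0` such that whenever `dist s t < η`, each point
of `Ω_t` is `δ`-close to a point of `Ω_s` and vice versa. -/
theorem omega_t_compact_and_hausdorff_continuous {X I : Type*}
    [MetricSpace X] [CompactSpace X] [MetricSpace I] [CompactSpace I]
    (f : X × I → X) (hf : Continuous f)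
    (m : ℕ) (hm : 0 < m)
    (hstab : ∀ t : I, Set.range ((fun x => f (x, t))^[m + 1])
        = Set.range ((fun x => f (x, t))^[m]))
    (Ω : I → Set (ℕ → X × I))
    (hΩ : ∀ t : I, Ω t = {z | ∃ x : ℕ → X,
        (∀ k, z k = (x k, t)) ∧ ∀ k, f (x (k + 1), t) = x k}) :
    (∀ t : I, IsCompact (Ω t)) ∧
    (∀ t : I, ∀ δ > (0 : ℝ), ∃ η > (0 : ℝ), ∀ s : I, dist s t < η →
        (∀ z ∈ Ω t, ∃ w ∈ Ω s, dInfty z w < δ) ∧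
        (∀ w ∈ Ω s, ∃ z ∈ Ω t, dInfty z w < δ)) := by
  constructor
  · -- compactness
    intro t
    have heq : Ω t = {z : ℕ → X × I | ∀ k, (z k).2 = t}
        ∩ {z : ℕ → X × I | ∀ k, f ((z (k + 1)).1, t) = (z k).1} := by
      rw [hΩ t]
      ext z
      constructor
      · rintro ⟨x, hzx, hfx⟩
        refine ⟨fun k => by rw [hzx k], fun k => by rw [hzx k, hzx (k + 1)]; exact hfx k⟩
      · rintro ⟨h2, hfx⟩
        exact ⟨fun k => (z k).1, fun k => Prod.ext rfl (h2 k), hfx⟩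
    rw [heq]
    apply IsClosed.isCompact
    apply IsClosed.inter
    · have : {z : ℕ → X × I | ∀ k, (z k).2 = t} = ⋂ k, {z : ℕ → X × I | (z k).2 = t} := by
        ext z; simp
      rw [this]
      exact isClosed_iInter fun k => isClosed_eq ((continuous_apply k).snd) continuous_const
    · have : {z : ℕ → X × I | ∀ k, f ((z (k + 1)).1, t) = (z k).1}
          = ⋂ k, {z : ℕ → X × I | f ((z (k + 1)).1, t) = (z k).1} := by
        ext z; simp
      rw [this]
      exact isClosed_iInter fun k => isClosed_eq
        (hf.comp (((continuous_apply (k + 1)).fst).prodMk continuous_const))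
        ((continuous_apply k).fst)
  · -- Hausdorff continuity
    intro t δ hδ
    have hδ2 : (0 : ℝ) < δ / 2 := half_pos hδ
    -- surjectivity of f_r on its core, for every parameter r
    have hsurj : ∀ r : I, ∀ p ∈ Set.range ((fun x => f (x, r))^[m]),
        ∃ q ∈ Set.range ((fun x => f (x, r))^[m]), f (q, r) = p := by
      intro r p hp
      rw [← hstab r] at hp
      obtain ⟨v, hv⟩ := hp
      refine ⟨(fun x => f (x, r))^[m] v, ⟨v, rfl⟩, ?_⟩
      rw [← hv, Function.iterate_succ_apply']
    obtain ⟨N, hN⟩ := exists_nat_one_div_lt hδ2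
    set M := m + N with hM
    -- uniform continuity of all iterates up to M at once
    have hGcont : Continuous (fun p : X × I => fun j : Fin (M + 1) => Gmap f j p) :=
      continuous_pi fun j => continuous_Gmap f hf j
    have hGuc := CompactSpace.uniformContinuous_of_continuous hGcont
    rw [Metric.uniformContinuous_iff] at hGuc
    obtain ⟨η₀, hη₀, hG⟩ := hGuc (δ / 2) hδ2
    refine ⟨min η₀ (δ / 2), lt_min hη₀ hδ2, fun s hst => ?_⟩
    have key : ∀ r r' : I, dist r r' < η₀ → ∀ u : X, ∀ j, j ≤ M →
        dist (Gmap f j (u, r)) (Gmap f j (u, r')) < δ / 2 := by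
      intro r r' hrr u j hj
      have hd : dist ((u, r) : X × I) (u, r') < η₀ := by
        rw [Prod.dist_eq, dist_self, max_eq_right dist_nonneg]
        exact hrr
      have h1 := hG hd
      rw [dist_pi_lt_iff hδ2] at h1
      exact h1 ⟨j, by omega⟩
    have hts : dist t s < η₀ := by
      rw [dist_comm]; exact lt_of_lt_of_le hst (min_le_left _ _)
    have hstδ : dist t s ≤ δ / 2 := by
      rw [dist_comm]; exact le_of_lt (lt_of_lt_of_le hst (min_le_right _ _))
    constructor
    · -- from Ω t to Ω s
      intro z hz
      rw [hΩ t] at hz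
      obtain ⟨x, hzx, hfx⟩ := hz
      obtain ⟨y, hy, hyk⟩ := approx f m N t s (hsurj s) x hfx
        (fun j hj => key t s hts (x (N + m)) j (by omega))
      refine ⟨fun k => (y k, s), by rw [hΩ s]; exact ⟨y, fun k => rfl, hy⟩, ?_⟩
      apply dInfty_lt _ _ hδ N (le_of_lt hN)
      intro i hi
      rw [hzx i, Prod.dist_eq]
      exact max_le (le_of_lt (hyk i hi)) hstδ
    · -- from Ω s to Ω t
      intro w hw
      rw [hΩ s] at hw
      obtain ⟨y, hwy, hfy⟩ := hw
      obtain ⟨x, hx, hxk⟩ := approx f m N s t (hsurj t) y hfy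
        (fun j hj => key s t (by rwa [dist_comm]) (y (N + m)) j (by omega))
      refine ⟨fun k => (x k, t), by rw [hΩ t]; exact ⟨x, fun k => rfl, hx⟩, ?_⟩
      apply dInfty_lt _ _ hδ N (le_of_lt hN)
      intro i hi
      rw [hwy i, Prod.dist_eq]
      refine max_le ?_ hstδ
      rw [dist_comm]
      exact le_of_lt (hxk i hi)
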